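/- arXiv:1707.00796 — 4 statements merged into one kernel-verified Lean document; each statement's English description precedes it below -/
import Mathlib

section
/- Let X, Z_i, Z_N, Z_R be random variables taking values in finite measurable spaces on a probability space (Ω, μ). Then I[X : Z_i | Z_N] − I[X : Z_i | ⟨Z_N, Z_R⟩] = (I[X : ⟨Z_N, Z_R⟩] − I[X : Z_N] − I[X : Z_R]) + I[⟨Z_i, Z_N⟩ : Z_R] − I[⟨Z_i, Z_N⟩ : Z_R | X]. -/
open MeasureTheory ProbabilityTheory

/-- Shannon entropy of a random variable with values in a finite measurable space. -/
noncomputable def entropy {Ω S : Type*} [MeasurableSpace Ω] [Fintype S] [MeasurableSpace S]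
    (X : Ω → S) (μ : Measure Ω) : ℝ :=
  ∑ x : S, Real.negMulLog ((μ.map X) {x}).toReal

/-- Conditional entropy H[X | Y]. -/
noncomputable def condEntropy {Ω S T : Type*} [MeasurableSpace Ω] [Fintype S] [MeasurableSpace S]
    [Fintype T] [MeasurableSpace T] (X : Ω → S) (Y : Ω → T) (μ : Measure Ω) : ℝ :=
  ∑ y : T, ((μ.map Y) {y}).toReal * entropy X (ProbabilityTheory.cond μ (Y ⁻¹' {y}))

/-- Mutual information I[X : Y]. -/
noncomputable def mutualInfo {Ω S T : Type*} [MeasurableSpace Ω] [Fintype S] [MeasurableSpace S]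
    [Fintype T] [MeasurableSpace T] (X : Ω → S) (Y : Ω → T) (μ : Measure Ω) : ℝ :=
  entropy X μ + entropy Y μ - entropy (fun ω => (X ω, Y ω)) μ

/-- Conditional mutual information I[X : Y | Z]. -/
noncomputable def condMutualInfo {Ω S T U : Type*} [MeasurableSpace Ω] [Fintype S]
    [MeasurableSpace S] [Fintype T] [MeasurableSpace T] [Fintype U] [MeasurableSpace U]
    (X : Ω → S) (Y : Ω → T) (Z : Ω → U) (μ : Measure Ω) : ℝ :=
  ∑ z : U, ((μ.map Z) {z}).toReal * mutualInfo X Y (ProbabilityTheory.cond μ (Z ⁻¹' {z}))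

section aux
variable {Ω : Type*} [MeasurableSpace Ω] (μ : Measure Ω)

lemma entropy_eq {S : Type*} [Fintype S] [MeasurableSpace S] [MeasurableSingletonClass S]
    (W : Ω → S) (hW : Measurable W) :
    entropy W μ = ∑ x : S, Real.negMulLog (μ (W ⁻¹' {x})).toReal := by
  unfold entropy
  simp [Measure.map_apply hW (measurableSet_singleton _)]

lemma entropy_comp {S T : Type*} [Fintype S] [MeasurableSpace S] [MeasurableSingletonClass S]
    [Fintype T] [MeasurableSpace T] [MeasurableSingletonClass T]
    (W : Ω → S) (hW : Measurable W) (e : S ≃ T) (V : Ω → T) (hV : ∀ ω, V ω = e (W ω)) :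
    entropy V μ = entropy W μ := by
  have hVW : V = fun ω => e (W ω) := funext hV
  have hm : Measurable V := by
    intro A hA
    have : V ⁻¹' A = W ⁻¹' (e ⁻¹' A) := by rw [hVW]; rfl
    rw [this]
    exact hW ((Set.toFinite _).measurableSet)
  rw [entropy_eq μ _ hm, entropy_eq μ W hW]
  refine (Fintype.sum_equiv e _ _ fun x => ?_).symm
  have hpre : V ⁻¹' {e x} = W ⁻¹' {x} := by rw [hVW]; ext ω; simp
  rw [hpre]
end aux

section chain
variable {Ω : Type*} [MeasurableSpace Ω] (μ : Measure Ω) [IsProbabilityMeasure μ]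
variable {S U : Type*} [Fintype S] [MeasurableSpace S] [MeasurableSingletonClass S]
  [Fintype U] [MeasurableSpace U] [MeasurableSingletonClass U]

omit [IsProbabilityMeasure μ] [Fintype U] in
lemma partition_meas (W : Ω → S) (Z : Ω → U) (hW : Measurable W) (hZ : Measurable Z) (z : U) :
    μ (Z ⁻¹' {z}) = ∑ w : S, μ (W ⁻¹' {w} ∩ Z ⁻¹' {z}) := by
  have hU : Z ⁻¹' {z} = ⋃ w : S, W ⁻¹' {w} ∩ Z ⁻¹' {z} := by
    ext ω; simp
  have hd : Pairwise (Function.onFun Disjoint fun w : S => W ⁻¹' {w} ∩ Z ⁻¹' {z}) := by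
    intro i j hij
    refine Set.disjoint_left.2 fun ω hi hj => hij ?_
    have h1 : W ω = i := hi.1
    have h2 : W ω = j := hj.1
    rw [← h1, h2]
  have hm := measure_iUnion (μ := μ) hd
    (fun w => (hW (measurableSet_singleton w)).inter (hZ (measurableSet_singleton z)))
  rw [tsum_fintype] at hm
  exact (congrArg μ hU).trans hm

lemma chain_rule (W : Ω → S) (Z : Ω → U) (hW : Measurable W) (hZ : Measurable Z) :
    ∑ z : U, (μ (Z ⁻¹' {z})).toReal * entropy W (ProbabilityTheory.cond μ (Z ⁻¹' {z}))
      = entropy (fun ω => (W ω, Z ω)) μ - entropy Z μ := by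
  have hWZ : Measurable fun ω => (W ω, Z ω) := hW.prodMk hZ
  rw [entropy_eq μ _ hWZ, entropy_eq μ Z hZ]
  have hpre : ∀ w z, (fun ω => (W ω, Z ω)) ⁻¹' {(w, z)} = W ⁻¹' {w} ∩ Z ⁻¹' {z} := by
    intro w z; ext ω; simp [Prod.ext_iff]
  have key : ∀ z : U,
      (μ (Z ⁻¹' {z})).toReal * entropy W (ProbabilityTheory.cond μ (Z ⁻¹' {z}))
        = (∑ w : S, Real.negMulLog (μ (W ⁻¹' {w} ∩ Z ⁻¹' {z})).toReal)
          - Real.negMulLog (μ (Z ⁻¹' {z})).toReal := by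
    intro z
    by_cases h0 : μ (Z ⁻¹' {z}) = 0
    · have hq : ∀ w : S, μ (W ⁻¹' {w} ∩ Z ⁻¹' {z}) = 0 := fun w =>
        measure_mono_null Set.inter_subset_right h0
      simp [h0, hq, Real.negMulLog_zero]
    · have hs : MeasurableSet (Z ⁻¹' {z}) := hZ (measurableSet_singleton z)
      have htop : μ (Z ⁻¹' {z}) ≠ ⊤ := measure_ne_top μ _
      set p : ℝ := (μ (Z ⁻¹' {z})).toReal with hp
      have hppos : 0 < p := ENNReal.toReal_pos h0 htop
      have hcond : entropy W (ProbabilityTheory.cond μ (Z ⁻¹' {z}))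
          = ∑ w : S, Real.negMulLog ((μ (W ⁻¹' {w} ∩ Z ⁻¹' {z})).toReal / p) := by
        rw [entropy_eq _ W hW]
        refine Finset.sum_congr rfl fun w _ => ?_
        rw [ProbabilityTheory.cond_apply hs]
        rw [Set.inter_comm]
        rw [ENNReal.toReal_mul, ENNReal.toReal_inv]
        rw [div_eq_inv_mul]
      rw [hcond, Finset.mul_sum]
      have hterm : ∀ w : S,
          p * Real.negMulLog ((μ (W ⁻¹' {w} ∩ Z ⁻¹' {z})).toReal / p)
            = Real.negMulLog (μ (W ⁻¹' {w} ∩ Z ⁻¹' {z})).toReal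
              + (μ (W ⁻¹' {w} ∩ Z ⁻¹' {z})).toReal * Real.log p := by
        intro w
        set q : ℝ := (μ (W ⁻¹' {w} ∩ Z ⁻¹' {z})).toReal with hqd
        by_cases hq0 : q = 0
        · simp [hq0, Real.negMulLog_zero]
        · have hqpos : 0 < q := lt_of_le_of_ne ENNReal.toReal_nonneg (Ne.symm hq0)
          unfold Real.negMulLog
          rw [Real.log_div hq0 hppos.ne']
          field_simp
          ring
      rw [Finset.sum_congr rfl fun w _ => hterm w]
      rw [Finset.sum_add_distrib, ← Finset.sum_mul]
      have hsum : ∑ w : S, (μ (W ⁻¹' {w} ∩ Z ⁻¹' {z})).toReal = p := by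
        rw [hp, partition_meas μ W Z hW hZ z, ENNReal.toReal_sum (fun w _ => measure_ne_top μ _)]
      rw [hsum]
      unfold Real.negMulLog
      ring
  rw [Finset.sum_congr rfl fun z _ => key z, Finset.sum_sub_distrib]
  rw [Fintype.sum_prod_type]
  rw [Finset.sum_comm]
  congr 1
  refine Finset.sum_congr rfl fun z _ => Finset.sum_congr rfl fun w _ => ?_
  rw [hpre]
end chain

section cmi
variable {Ω : Type*} [MeasurableSpace Ω] (μ : Measure Ω) [IsProbabilityMeasure μ]
variable {S T U : Type*} [Fintype S] [MeasurableSpace S] [MeasurableSingletonClass S]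
  [Fintype T] [MeasurableSpace T] [MeasurableSingletonClass T]
  [Fintype U] [MeasurableSpace U] [MeasurableSingletonClass U]

lemma cmi_eq (X : Ω → S) (Y : Ω → T) (Z : Ω → U)
    (hX : Measurable X) (hY : Measurable Y) (hZ : Measurable Z) :
    condMutualInfo X Y Z μ
      = entropy (fun ω => (X ω, Z ω)) μ + entropy (fun ω => (Y ω, Z ω)) μ
        - entropy (fun ω => ((X ω, Y ω), Z ω)) μ - entropy Z μ := by
  have h1 := chain_rule μ X Z hX hZ
  have h2 := chain_rule μ Y Z hY hZ
  have h3 := chain_rule μ (fun ω => (X ω, Y ω)) Z (hX.prodMk hY) hZ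
  unfold condMutualInfo mutualInfo
  have hmap : ∀ z : U, ((μ.map Z) {z}).toReal = (μ (Z ⁻¹' {z})).toReal := fun z => by
    rw [Measure.map_apply hZ (measurableSet_singleton z)]
  simp only [hmap, mul_add, mul_sub, Finset.sum_add_distrib, Finset.sum_sub_distrib]
  rw [h1, h2, h3]
  ring
end cmi

/-- Lemma 2, equation (14b): the approximation error of the local utility satisfies
`I[X : Zi | ZN] − I[X : Zi | ⟨ZN, ZR⟩]
  = (I[X : ⟨ZN, ZR⟩] − I[X : ZN] − I[X : ZR]) + I[⟨Zi, ZN⟩ : ZR] − I[⟨Zi, ZN⟩ : ZR | X]`. -/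
theorem approx_local_utility_error_second_form
    {Ω 𝒳 𝒵i 𝒵N 𝒵R : Type*} [MeasurableSpace Ω]
    [Fintype 𝒳] [MeasurableSpace 𝒳] [MeasurableSingletonClass 𝒳]
    [Fintype 𝒵i] [MeasurableSpace 𝒵i] [MeasurableSingletonClass 𝒵i]
    [Fintype 𝒵N] [MeasurableSpace 𝒵N] [MeasurableSingletonClass 𝒵N]
    [Fintype 𝒵R] [MeasurableSpace 𝒵R] [MeasurableSingletonClass 𝒵R]
    (μ : Measure Ω) [IsProbabilityMeasure μ]
    (X : Ω → 𝒳) (Zi : Ω → 𝒵i) (ZN : Ω → 𝒵N) (ZR : Ω → 𝒵R)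
    (hX : Measurable X) (hZi : Measurable Zi) (hZN : Measurable ZN) (hZR : Measurable ZR) :
    condMutualInfo X Zi ZN μ - condMutualInfo X Zi (fun ω => (ZN ω, ZR ω)) μ
      = (mutualInfo X (fun ω => (ZN ω, ZR ω)) μ - mutualInfo X ZN μ - mutualInfo X ZR μ)
        + mutualInfo (fun ω => (Zi ω, ZN ω)) ZR μ
        - condMutualInfo (fun ω => (Zi ω, ZN ω)) ZR X μ := by
  have hNR : Measurable fun ω => (ZN ω, ZR ω) := hZN.prodMk hZR
  have hiN : Measurable fun ω => (Zi ω, ZN ω) := hZi.prodMk hZN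
  have hc1 := cmi_eq μ X Zi ZN hX hZi hZN
  have hc2 : condMutualInfo X Zi (fun ω => (ZN ω, ZR ω)) μ
      = entropy (fun ω => (X ω, (ZN ω, ZR ω))) μ + entropy (fun ω => (Zi ω, (ZN ω, ZR ω))) μ
        - entropy (fun ω => ((X ω, Zi ω), (ZN ω, ZR ω))) μ
        - entropy (fun ω => (ZN ω, ZR ω)) μ :=
    cmi_eq μ X Zi _ hX hZi hNR
  have hc3 : condMutualInfo (fun ω => (Zi ω, ZN ω)) ZR X μ
      = entropy (fun ω => ((Zi ω, ZN ω), X ω)) μ + entropy (fun ω => (ZR ω, X ω)) μ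
        - entropy (fun ω => (((Zi ω, ZN ω), ZR ω), X ω)) μ - entropy X μ :=
    cmi_eq μ _ ZR X hiN hZR hX
  have e1 : entropy (fun ω => (Zi ω, (ZN ω, ZR ω))) μ
      = entropy (fun ω => ((Zi ω, ZN ω), ZR ω)) μ :=
    entropy_comp μ _ ((hZi.prodMk hZN).prodMk hZR) (Equiv.prodAssoc 𝒵i 𝒵N 𝒵R)
      _ (fun ω => rfl)
  have e2 : entropy (fun ω => (((Zi ω, ZN ω), ZR ω), X ω)) μ
      = entropy (fun ω => ((X ω, Zi ω), (ZN ω, ZR ω))) μ :=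
    entropy_comp μ _ ((hX.prodMk hZi).prodMk hNR)
      ⟨fun p => (((p.1.2, p.2.1), p.2.2), p.1.1),
       fun p => ((p.2, p.1.1.1), (p.1.1.2, p.1.2)),
       fun ⟨⟨a, b⟩, c, d⟩ => rfl, fun ⟨⟨⟨a, b⟩, c⟩, d⟩ => rfl⟩
      _ (fun ω => rfl)
  have e3 : entropy (fun ω => (ZR ω, X ω)) μ = entropy (fun ω => (X ω, ZR ω)) μ :=
    entropy_comp μ _ (hX.prodMk hZR) (Equiv.prodComm 𝒳 𝒵R) _ (fun ω => rfl)
  have e4 : entropy (fun ω => ((Zi ω, ZN ω), X ω)) μ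
      = entropy (fun ω => ((X ω, Zi ω), ZN ω)) μ :=
    entropy_comp μ _ ((hX.prodMk hZi).prodMk hZN)
      ⟨fun p => ((p.1.2, p.2), p.1.1), fun p => ((p.2, p.1.1), p.1.2),
       fun ⟨⟨a, b⟩, c⟩ => rfl, fun ⟨⟨a, b⟩, c⟩ => rfl⟩
      _ (fun ω => rfl)
  simp only [mutualInfo] at *
  linarith [hc1, hc2, hc3, e1, e2, e3, e4]
end

section
/- Let X, Z_N, Z_R be random variables taking values in finite measurable spaces on a probability space (Ω, μ), and let Z' and Z'' be two further finite-valued random variables (the measurement variables corresponding to two admissible actions of agent i). Assume I[Z' : Z_R | Z_N] = 0, I[Z' : Z_R | ⟨X, Z_N⟩] = 0, I[Z'' : Z_R | Z_N] = 0, and I[Z'' : Z_R | ⟨X, Z_N⟩] = 0. Then the difference of the localized utilities equals the difference of the global potential: I[X : Z' | Z_N] − I[X : Z'' | Z_N] = I[X : ⟨Z', Z_N, Z_R⟩] − I[X : ⟨Z'', Z_N, Z_R⟩]. -/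
open MeasureTheory ProbabilityTheory

open scoped ENNReal

section Aux

variable {Ω : Type*} [MeasurableSpace Ω] {μ : Measure Ω} [IsProbabilityMeasure μ]

/-- Entropy is invariant under composition with an injective map (finite spaces). -/
lemma entropy_comp_inj {S T : Type*} [Fintype S] [MeasurableSpace S] [MeasurableSingletonClass S]
    [Fintype T] [MeasurableSpace T] [MeasurableSingletonClass T]
    (W : Ω → S) (hW : Measurable W) (f : S → T) (hf : Function.Injective f) :
    entropy (fun ω => f (W ω)) μ = entropy W μ := by
  classical
  have hfm : Measurable f := measurable_of_countable f
  have hmap : μ.map (fun ω => f (W ω)) = (μ.map W).map f := by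
    rw [Measure.map_map hfm hW]; rfl
  unfold entropy
  rw [hmap]
  have hzero : ∀ t ∈ Finset.univ, t ∉ Finset.univ.image f →
      Real.negMulLog (((μ.map W).map f) {t}).toReal = 0 := by
    intro t _ ht
    have : ((μ.map W).map f) {t} = μ.map W (f ⁻¹' {t}) :=
      Measure.map_apply hfm (measurableSet_singleton t)
    have hempty : f ⁻¹' {t} = ∅ := by
      ext s; simp only [Set.mem_preimage, Set.mem_singleton_iff, Set.mem_empty_iff_false,
        iff_false]
      intro h; exact ht (Finset.mem_image.2 ⟨s, Finset.mem_univ s, h⟩)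
    simp [this, hempty]
  rw [← Finset.sum_subset (Finset.subset_univ (Finset.univ.image f)) hzero,
    Finset.sum_image (fun a _ b _ h => hf h)]
  refine Finset.sum_congr rfl fun s _ => ?_
  rw [Measure.map_apply hfm (measurableSet_singleton _)]
  have hpre : f ⁻¹' {f s} = {s} := by ext a; simp [hf.eq_iff]
  rw [hpre]

/-- Chain rule: H[X|Y] = H[X,Y] - H[Y]. -/
lemma condEntropy_chain {S T : Type*} [Fintype S] [MeasurableSpace S] [MeasurableSingletonClass S]
    [Fintype T] [MeasurableSpace T] [MeasurableSingletonClass T]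
    (X : Ω → S) (Y : Ω → T) (hX : Measurable X) (hY : Measurable Y) :
    condEntropy X Y μ = entropy (fun ω => (X ω, Y ω)) μ - entropy Y μ := by
  have hkey : ∀ y : T,
      ((μ.map Y) {y}).toReal * entropy X (ProbabilityTheory.cond μ (Y ⁻¹' {y}))
        = (∑ x : S, Real.negMulLog ((μ.map (fun ω => (X ω, Y ω))) {(x, y)}).toReal)
          - Real.negMulLog ((μ.map Y) {y}).toReal := by
    intro y
    set A := Y ⁻¹' {y} with hA_def
    have hA : MeasurableSet A := hY (measurableSet_singleton y)
    have hYy : μ.map Y {y} = μ A := Measure.map_apply hY (measurableSet_singleton y)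
    have hq : ∀ x : S, (μ.map (fun ω => (X ω, Y ω))) {(x, y)} = μ (A ∩ X ⁻¹' {x}) := by
      intro x
      rw [Measure.map_apply (hX.prodMk hY) (measurableSet_singleton _)]
      congr 1
      ext ω; simp [A, Prod.ext_iff, and_comm]
    by_cases h0 : μ A = 0
    · have hq0 : ∀ x : S, (μ.map (fun ω => (X ω, Y ω))) {(x, y)} = 0 := by
        intro x
        refine le_antisymm ?_ zero_le
        rw [hq x, ← h0]
        exact measure_mono Set.inter_subset_left
      simp [hYy, h0, hq0]
    · have hfin : μ A ≠ ∞ := (measure_lt_top μ A).ne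
      set P := (μ A).toReal with hP_def
      have hP0 : P ≠ 0 := by
        simp [hP_def, ENNReal.toReal_ne_zero, h0, hfin]
      have hPpos : 0 < P := lt_of_le_of_ne ENNReal.toReal_nonneg (Ne.symm hP0)
      set r : S → ℝ := fun x => (μ (A ∩ X ⁻¹' {x})).toReal with hr_def
      have hcond : ∀ x : S, ((ProbabilityTheory.cond μ A).map X {x}).toReal = r x / P := by
        intro x
        rw [Measure.map_apply hX (measurableSet_singleton x),
          ProbabilityTheory.cond_apply hA, ENNReal.toReal_mul, ENNReal.toReal_inv]
        rw [div_eq_inv_mul]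
      have hsum : ∑ x : S, r x = P := by
        have h1 : ∑ x : S, (μ.restrict A) (X ⁻¹' {x}) = (μ.restrict A) (X ⁻¹' ↑(Finset.univ : Finset S)) :=
          sum_measure_preimage_singleton _ (fun t _ => hX (measurableSet_singleton t))
        simp only [Finset.coe_univ, Set.preimage_univ] at h1
        have h2 : ∀ x : S, (μ.restrict A) (X ⁻¹' {x}) = μ (A ∩ X ⁻¹' {x}) := by
          intro x
          rw [Measure.restrict_apply (hX (measurableSet_singleton x)), Set.inter_comm]
        have h3 : (μ.restrict A) Set.univ = μ A := by simp
        rw [hr_def, hP_def, ← h3, ← h1]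
        rw [ENNReal.toReal_sum (fun x _ => by rw [h2]; exact (measure_lt_top μ _).ne)]
        exact Finset.sum_congr rfl fun x _ => by rw [h2]
      have hpt : ∀ x : S, P * Real.negMulLog (r x / P)
          = Real.negMulLog (r x) + r x * Real.log P := by
        intro x
        by_cases hr0 : r x = 0
        · simp [hr0]
        · have hrpos : (0:ℝ) < r x := lt_of_le_of_ne ENNReal.toReal_nonneg (Ne.symm hr0)
          rw [Real.negMulLog, Real.negMulLog, Real.log_div hr0 hP0]
          field_simp
          ring
      have hent : entropy X (ProbabilityTheory.cond μ A) = ∑ x : S, Real.negMulLog (r x / P) := by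
        unfold entropy
        exact Finset.sum_congr rfl fun x _ => by rw [hcond x]
      rw [hYy, hent, ← hP_def, Finset.mul_sum]
      rw [Finset.sum_congr rfl fun x _ => hpt x, Finset.sum_add_distrib, ← Finset.sum_mul, hsum]
      have : ∀ x : S, Real.negMulLog ((μ.map (fun ω => (X ω, Y ω))) {(x, y)}).toReal
          = Real.negMulLog (r x) := fun x => by rw [hq x]
      rw [Finset.sum_congr rfl fun x _ => this x]
      rw [Real.negMulLog]
      ring
  unfold condEntropy
  rw [Finset.sum_congr rfl fun y _ => hkey y, Finset.sum_sub_distrib]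
  congr 1
  · rw [Finset.sum_comm]
    unfold entropy
    rw [Fintype.sum_prod_type]

/-- Conditional mutual information decomposed into conditional entropies. -/
lemma condMutualInfo_eq {S T U : Type*} [Fintype S] [MeasurableSpace S]
    [Fintype T] [MeasurableSpace T] [Fintype U] [MeasurableSpace U]
    (X : Ω → S) (Y : Ω → T) (Z : Ω → U) :
    condMutualInfo X Y Z μ
      = condEntropy X Z μ + condEntropy Y Z μ - condEntropy (fun ω => (X ω, Y ω)) Z μ := by
  unfold condMutualInfo condEntropy mutualInfo
  rw [← Finset.sum_add_distrib, ← Finset.sum_sub_distrib]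
  exact Finset.sum_congr rfl fun z _ => by ring

end Aux

section Key

variable {Ω : Type*} [MeasurableSpace Ω] {μ : Measure Ω} [IsProbabilityMeasure μ]

lemma key_alignment {𝒳 𝒵N 𝒵R 𝒵' : Type*}
    [Fintype 𝒳] [MeasurableSpace 𝒳] [MeasurableSingletonClass 𝒳]
    [Fintype 𝒵N] [MeasurableSpace 𝒵N] [MeasurableSingletonClass 𝒵N]
    [Fintype 𝒵R] [MeasurableSpace 𝒵R] [MeasurableSingletonClass 𝒵R]
    [Fintype 𝒵'] [MeasurableSpace 𝒵'] [MeasurableSingletonClass 𝒵']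
    (X : Ω → 𝒳) (ZN : Ω → 𝒵N) (ZR : Ω → 𝒵R) (Z' : Ω → 𝒵')
    (hX : Measurable X) (hZN : Measurable ZN) (hZR : Measurable ZR) (hZ' : Measurable Z')
    (h1 : condMutualInfo Z' ZR ZN μ = 0)
    (h2 : condMutualInfo Z' ZR (fun ω => (X ω, ZN ω)) μ = 0) :
    condMutualInfo X Z' ZN μ - mutualInfo X (fun ω => (Z' ω, ZN ω, ZR ω)) μ
      = entropy (fun ω => (X ω, ZN ω, ZR ω)) μ - entropy X μ
        - entropy (fun ω => (ZN ω, ZR ω)) μ := by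
  -- canonical tuple measurability
  have hWXN : Measurable (fun ω => (X ω, ZN ω)) := hX.prodMk hZN
  have hWNZ : Measurable (fun ω => (ZN ω, Z' ω)) := hZN.prodMk hZ'
  have hWNR : Measurable (fun ω => (ZN ω, ZR ω)) := hZN.prodMk hZR
  have hWXNZ : Measurable (fun ω => (X ω, ZN ω, Z' ω)) := hX.prodMk (hZN.prodMk hZ')
  have hWNRZ : Measurable (fun ω => (ZN ω, ZR ω, Z' ω)) := hZN.prodMk (hZR.prodMk hZ')
  have hWXNR : Measurable (fun ω => (X ω, ZN ω, ZR ω)) := hX.prodMk (hZN.prodMk hZR)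
  have hWXNRZ : Measurable (fun ω => (X ω, ZN ω, ZR ω, Z' ω)) :=
    hX.prodMk (hZN.prodMk (hZR.prodMk hZ'))
  -- canonicalization equalities
  have e1 : entropy (fun ω => (Z' ω, ZN ω)) μ = entropy (fun ω => (ZN ω, Z' ω)) μ :=
    entropy_comp_inj _ hWNZ (fun p => (p.2, p.1))
      ((show Function.LeftInverse (fun q : _ × _ => (q.2, q.1)) _ from fun p => rfl).injective)
  have e2 : entropy (fun ω => ((X ω, Z' ω), ZN ω)) μ
      = entropy (fun ω => (X ω, ZN ω, Z' ω)) μ :=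
    entropy_comp_inj _ hWXNZ (fun p => ((p.1, p.2.2), p.2.1))
      ((show Function.LeftInverse (fun q : (_ × _) × _ => (q.1.1, (q.2, q.1.2))) _ from
        fun p => rfl).injective)
  have e3 : entropy (fun ω => (ZR ω, ZN ω)) μ = entropy (fun ω => (ZN ω, ZR ω)) μ :=
    entropy_comp_inj _ hWNR (fun p => (p.2, p.1))
      ((show Function.LeftInverse (fun q : _ × _ => (q.2, q.1)) _ from fun p => rfl).injective)
  have e4 : entropy (fun ω => ((Z' ω, ZR ω), ZN ω)) μ
      = entropy (fun ω => (ZN ω, ZR ω, Z' ω)) μ :=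
    entropy_comp_inj _ hWNRZ (fun p => ((p.2.2, p.2.1), p.1))
      ((show Function.LeftInverse (fun q : (_ × _) × _ => (q.2, (q.1.2, q.1.1))) _ from
        fun p => rfl).injective)
  have e5 : entropy (fun ω => (Z' ω, (X ω, ZN ω))) μ
      = entropy (fun ω => (X ω, ZN ω, Z' ω)) μ :=
    entropy_comp_inj _ hWXNZ (fun p => (p.2.2, (p.1, p.2.1)))
      ((show Function.LeftInverse (fun q : _ × (_ × _) => (q.2.1, (q.2.2, q.1))) _ from
        fun p => rfl).injective)
  have e6 : entropy (fun ω => (ZR ω, (X ω, ZN ω))) μ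
      = entropy (fun ω => (X ω, ZN ω, ZR ω)) μ :=
    entropy_comp_inj _ hWXNR (fun p => (p.2.2, (p.1, p.2.1)))
      ((show Function.LeftInverse (fun q : _ × (_ × _) => (q.2.1, (q.2.2, q.1))) _ from
        fun p => rfl).injective)
  have e7 : entropy (fun ω => ((Z' ω, ZR ω), (X ω, ZN ω))) μ
      = entropy (fun ω => (X ω, ZN ω, ZR ω, Z' ω)) μ :=
    entropy_comp_inj _ hWXNRZ (fun p => ((p.2.2.2, p.2.2.1), (p.1, p.2.1)))
      ((show Function.LeftInverse
          (fun q : (_ × _) × (_ × _) => (q.2.1, (q.2.2, (q.1.2, q.1.1)))) _ from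
        fun p => rfl).injective)
  have e8 : entropy (fun ω => (Z' ω, ZN ω, ZR ω)) μ
      = entropy (fun ω => (ZN ω, ZR ω, Z' ω)) μ :=
    entropy_comp_inj _ hWNRZ (fun p => (p.2.2, (p.1, p.2.1)))
      ((show Function.LeftInverse (fun q : _ × (_ × _) => (q.2.1, (q.2.2, q.1))) _ from
        fun p => rfl).injective)
  have e9 : entropy (fun ω => (X ω, (Z' ω, ZN ω, ZR ω))) μ
      = entropy (fun ω => (X ω, ZN ω, ZR ω, Z' ω)) μ :=
    entropy_comp_inj _ hWXNRZ (fun p => (p.1, (p.2.2.2, (p.2.1, p.2.2.1))))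
      ((show Function.LeftInverse
          (fun q : _ × (_ × (_ × _)) => (q.1, (q.2.2.1, (q.2.2.2, q.2.1)))) _ from
        fun p => rfl).injective)
  -- expand the conditional mutual informations
  have hA : condMutualInfo X Z' ZN μ
      = condEntropy X ZN μ + condEntropy Z' ZN μ - condEntropy (fun ω => (X ω, Z' ω)) ZN μ :=
    condMutualInfo_eq X Z' ZN
  rw [condEntropy_chain X ZN hX hZN, condEntropy_chain Z' ZN hZ' hZN,
    condEntropy_chain _ ZN (hX.prodMk hZ') hZN] at hA
  have h1' : condMutualInfo Z' ZR ZN μ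
      = condEntropy Z' ZN μ + condEntropy ZR ZN μ - condEntropy (fun ω => (Z' ω, ZR ω)) ZN μ :=
    condMutualInfo_eq Z' ZR ZN
  rw [h1, condEntropy_chain Z' ZN hZ' hZN, condEntropy_chain ZR ZN hZR hZN,
    condEntropy_chain _ ZN (hZ'.prodMk hZR) hZN] at h1'
  have h2' : condMutualInfo Z' ZR (fun ω => (X ω, ZN ω)) μ
      = condEntropy Z' (fun ω => (X ω, ZN ω)) μ + condEntropy ZR (fun ω => (X ω, ZN ω)) μ
        - condEntropy (fun ω => (Z' ω, ZR ω)) (fun ω => (X ω, ZN ω)) μ :=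
    condMutualInfo_eq Z' ZR _
  rw [h2, condEntropy_chain Z' _ hZ' hWXN, condEntropy_chain ZR _ hZR hWXN,
    condEntropy_chain _ _ (hZ'.prodMk hZR) hWXN] at h2'
  have hB : mutualInfo X (fun ω => (Z' ω, ZN ω, ZR ω)) μ
      = entropy X μ + entropy (fun ω => (Z' ω, ZN ω, ZR ω)) μ
        - entropy (fun ω => (X ω, (Z' ω, ZN ω, ZR ω))) μ := rfl
  rw [hA, hB, e1, e2, e5, e6, e7, e8, e9] at *
  linarith [h1', h2', e3, e4]

end Key

/-- Proposition 1: under the conditional-independence assumptions, the localized utility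
differences coincide with the global potential differences. -/
theorem localized_utility_is_potential_aligned
    {Ω 𝒳 𝒵N 𝒵R 𝒵' 𝒵'' : Type*} [MeasurableSpace Ω]
    [Fintype 𝒳] [MeasurableSpace 𝒳] [MeasurableSingletonClass 𝒳]
    [Fintype 𝒵N] [MeasurableSpace 𝒵N] [MeasurableSingletonClass 𝒵N]
    [Fintype 𝒵R] [MeasurableSpace 𝒵R] [MeasurableSingletonClass 𝒵R]
    [Fintype 𝒵'] [MeasurableSpace 𝒵'] [MeasurableSingletonClass 𝒵']
    [Fintype 𝒵''] [MeasurableSpace 𝒵''] [MeasurableSingletonClass 𝒵'']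
    (μ : Measure Ω) [IsProbabilityMeasure μ]
    (X : Ω → 𝒳) (ZN : Ω → 𝒵N) (ZR : Ω → 𝒵R) (Z' : Ω → 𝒵') (Z'' : Ω → 𝒵'')
    (hX : Measurable X) (hZN : Measurable ZN) (hZR : Measurable ZR)
    (hZ' : Measurable Z') (hZ'' : Measurable Z'')
    (h1 : condMutualInfo Z' ZR ZN μ = 0)
    (h2 : condMutualInfo Z' ZR (fun ω => (X ω, ZN ω)) μ = 0)
    (h3 : condMutualInfo Z'' ZR ZN μ = 0)
    (h4 : condMutualInfo Z'' ZR (fun ω => (X ω, ZN ω)) μ = 0) :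
    condMutualInfo X Z' ZN μ - condMutualInfo X Z'' ZN μ
      = mutualInfo X (fun ω => (Z' ω, ZN ω, ZR ω)) μ
        - mutualInfo X (fun ω => (Z'' ω, ZN ω, ZR ω)) μ := by
  have k1 := key_alignment X ZN ZR Z' hX hZN hZR hZ' h1 h2
  have k2 := key_alignment X ZN ZR Z'' hX hZN hZR hZ'' h3 h4
  linarith [k1, k2]
end

section
/- Let a finite strategic-form game with players indexed by a finite type ι and nonempty finite strategy sets S i admit a potential function φ for its utilities U. Then every strategy profile s* that maximizes φ over the (finite, nonempty) set of all strategy profiles is a pure Nash equilibrium of the game; in particular, every such finite potential game possesses at least one pure Nash equilibrium. -/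
/-- In a finite potential game, every strategy profile maximizing the potential function is a
pure Nash equilibrium; in particular the game possesses at least one pure Nash equilibrium. -/
theorem potential_game_has_pure_nash
    {ι : Type*} [Fintype ι] [DecidableEq ι]
    {S : ι → Type*} [∀ i, Fintype (S i)] [∀ i, Nonempty (S i)]
    (U : ∀ i : ι, (∀ j, S j) → ℝ) (φ : (∀ j, S j) → ℝ)
    (hpot : ∀ (i : ι) (si' si'' : S i) (s : ∀ j, S j),
      U i (Function.update s i si') - U i (Function.update s i si'')
        = φ (Function.update s i si') - φ (Function.update s i si'')) :
    (∀ sstar : ∀ j, S j, (∀ s : ∀ j, S j, φ s ≤ φ sstar) →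
        ∀ (i : ι) (si : S i), U i (Function.update sstar i si) ≤ U i sstar)
      ∧ ∃ sstar : ∀ j, S j,
          ∀ (i : ι) (si : S i), U i (Function.update sstar i si) ≤ U i sstar := by
  have key : ∀ sstar : ∀ j, S j, (∀ s : ∀ j, S j, φ s ≤ φ sstar) →
      ∀ (i : ι) (si : S i), U i (Function.update sstar i si) ≤ U i sstar := by
    intro sstar hmax i si
    have h := hpot i si (sstar i) sstar
    rw [Function.update_eq_self] at h
    have := hmax (Function.update sstar i si)
    linarith
  refine ⟨key, ?_⟩
  obtain ⟨sstar, _, hmax⟩ := Finset.exists_max_image Finset.univ φ ⟨Classical.arbitrary _, Finset.mem_univ _⟩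
  exact ⟨sstar, key sstar fun s => hmax s (Finset.mem_univ s)⟩
end

section
/- Let a finite strategic-form game with players indexed by a finite type ι and nonempty finite strategy sets S i have utilities U admitting a potential function φ, and let Ũ be another family of utilities on the same strategy spaces with |U i s − Ũ i s| ≤ Δ for every player i and every strategy profile s. Then the game with utilities Ũ possesses at least one 2Δ-equilibrium. -/
/-- Theorem 1 (existence form): if utilities `U` admit a potential function `φ` and `Ut` is a
family of utilities on the same strategy spaces with `|U i s − Ut i s| ≤ Δ` for all `i` and `s`,
then the game with utilities `Ut` possesses at least one `2Δ`-equilibrium. -/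
theorem approx_potential_game_has_two_delta_equilibrium
    {ι : Type*} [Fintype ι] [DecidableEq ι]
    {S : ι → Type*} [∀ i, Fintype (S i)] [∀ i, Nonempty (S i)]
    (U Ut : ∀ i : ι, (∀ j, S j) → ℝ) (φ : (∀ j, S j) → ℝ) (Δ : ℝ)
    (hpot : ∀ (i : ι) (si' si'' : S i) (s : ∀ j, S j),
      U i (Function.update s i si') - U i (Function.update s i si'')
        = φ (Function.update s i si') - φ (Function.update s i si''))
    (hclose : ∀ (i : ι) (s : ∀ j, S j), |U i s - Ut i s| ≤ Δ) :
    ∃ s : ∀ j, S j, ∀ (i : ι) (si' : S i),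
      Ut i (Function.update s i si') - Ut i s ≤ 2 * Δ := by
  obtain ⟨s, hs⟩ := Finite.exists_max φ
  refine ⟨s, fun i si' => ?_⟩
  have h1 := hpot i si' (s i) s
  rw [Function.update_eq_self] at h1
  have h2 := hclose i (Function.update s i si')
  have h3 := hclose i s
  have h4 := hs (Function.update s i si')
  rw [abs_le] at h2 h3
  linarith [h2.1, h2.2, h3.1, h3.2]
end
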